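/- arXiv:2602.12861 — 5 statements merged into one kernel-verified Lean document; each statement's English description precedes it below -/
import Mathlib

section
/- Let L be a Lawson compact algebraic L-domain with its Scott topology. Then the nonempty co-prime elements of the lattice CO(L) of compact-open subsets (ordered by inclusion) are precisely the principal filters ↑k with k ∈ K(L); that is, a nonempty compact-open set U is co-prime in CO(L) if and only if U = ↑k for some compact element k of L. -/
section Domains

variable (P : Type*) [PartialOrder P]

/-- A dcpo: every nonempty directed subset has a least upper bound. -/
def DirectedComplete : Prop :=
  ∀ D : Set P, D.Nonempty → DirectedOn (· ≤ ·) D → ∃ s, IsLUB D s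

variable {P}

/-- A compact (finite) element of a poset. -/
def IsCompactElt (k : P) : Prop :=
  ∀ D : Set P, D.Nonempty → DirectedOn (· ≤ ·) D → ∀ s : P, IsLUB D s → k ≤ s →
    ∃ d ∈ D, k ≤ d

/-- A Scott-open subset: an upper set inaccessible by directed suprema. -/
def ScottOpen (U : Set P) : Prop :=
  IsUpperSet U ∧ ∀ D : Set P, D.Nonempty → DirectedOn (· ≤ ·) D → ∀ s : P, IsLUB D s →
    s ∈ U → (D ∩ U).Nonempty

/-- Compactness of a set with respect to covers by Scott-open sets. -/
def ScottCompactSet (K : Set P) : Prop :=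
  ∀ C : Set (Set P), (∀ V ∈ C, ScottOpen V) → K ⊆ ⋃₀ C →
    ∃ F : Finset (Set P), ↑F ⊆ C ∧ K ⊆ ⋃₀ (F : Set (Set P))

variable (P)

/-- The collection of compact-open subsets (w.r.t. the Scott topology). -/
def CO : Set (Set P) := {U | ScottOpen U ∧ ScottCompactSet U}

/-- An algebraic domain: a dcpo in which, for every `x`, the set of compact elements
below `x` is a (nonempty) directed set with least upper bound `x`. -/
def IsAlgebraicDomain : Prop :=
  DirectedComplete P ∧
  ∀ x : P,
    (Set.Iic x ∩ {k | IsCompactElt k}).Nonempty ∧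
    DirectedOn (· ≤ ·) (Set.Iic x ∩ {k | IsCompactElt k}) ∧
    IsLUB (Set.Iic x ∩ {k | IsCompactElt k}) x

/-- Every principal ideal `↓x` is a complete lattice in the induced order
(equivalently: every subset of `↓x` has a least upper bound inside `↓x`). -/
def PrincipalIdealsComplete : Prop :=
  ∀ x : P, ∀ S : Set P, S ⊆ Set.Iic x →
    ∃ s, s ≤ x ∧ (∀ a ∈ S, a ≤ s) ∧ ∀ u, u ≤ x → (∀ a ∈ S, a ≤ u) → s ≤ u

/-- An algebraic L-domain. -/
def IsAlgebraicLDomain : Prop := IsAlgebraicDomain P ∧ PrincipalIdealsComplete P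

/-- The Lawson topology: generated by the Scott-open sets together with complements
of principal filters. -/
def lawsonTopology : TopologicalSpace P :=
  TopologicalSpace.generateFrom ({U | ScottOpen U} ∪ {U | ∃ x : P, U = (Set.Ici x)ᶜ})

/-- Lawson compactness: compactness in the Lawson topology. -/
def LawsonCompact : Prop := @CompactSpace P (lawsonTopology P)

end Domains

section FDD

variable {L : Type*} [Lattice L] [BoundedOrder L]

/-- A nonzero co-prime element. -/
def CoprimeElt (a : L) : Prop :=
  a ≠ ⊥ ∧ ∀ x y : L, a ≤ x ⊔ y → a ≤ x ∨ a ≤ y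

/-- A finitely disjunctive distributive lattice (FDD-lattice): a bounded distributive
lattice in which (1) every element is a finite join of nonzero co-primes, and
(2) the meet of two nonzero co-primes is a finite join of pairwise disjoint
nonzero co-primes. -/
def IsFDD (L : Type*) [DistribLattice L] [BoundedOrder L] : Prop :=
  (∀ x : L, ∃ F : Finset L, (∀ a ∈ F, CoprimeElt a) ∧ x = F.sup id) ∧
  (∀ a b : L, CoprimeElt a → CoprimeElt b →
    ∃ F : Finset L, (∀ c ∈ F, CoprimeElt c) ∧
      (∀ c ∈ F, ∀ d ∈ F, c ≠ d → c ⊓ d = ⊥) ∧ a ⊓ b = F.sup id)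

/-- A point of a bounded lattice: a lattice homomorphism into the two-element
bounded lattice `Bool` preserving `0`, `1`, binary meets and binary joins. -/
def IsPoint (p : L → Bool) : Prop :=
  p ⊥ = false ∧ p ⊤ = true ∧
  (∀ x y : L, p (x ⊓ y) = (p x && p y)) ∧
  (∀ x y : L, p (x ⊔ y) = (p x || p y))

end FDD

/-- The poset of points of a bounded lattice, with the pointwise order. -/
def Pt (L : Type*) [Lattice L] [BoundedOrder L] : Type _ :=
  {p : L → Bool // IsPoint p}

noncomputable instance (L : Type*) [Lattice L] [BoundedOrder L] : PartialOrder (Pt L) :=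
  inferInstanceAs (PartialOrder {p : L → Bool // IsPoint p})

/-- `γ_a : L → {0,1}`, `γ_a x = 1` iff `a ≤ x`. -/
noncomputable def gammaPt {L : Type*} [Lattice L] [BoundedOrder L] (a : L) : L → Bool :=
  fun x => @decide (a ≤ x) (Classical.propDecidable _)

/-- A bounded lattice homomorphism. -/
def IsBLH {L M : Type*} [Lattice L] [BoundedOrder L] [Lattice M] [BoundedOrder M]
    (f : L → M) : Prop :=
  f ⊥ = ⊥ ∧ f ⊤ = ⊤ ∧ (∀ x y, f (x ⊓ y) = f x ⊓ f y) ∧ (∀ x y, f (x ⊔ y) = f x ⊔ f y)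

section Aux

variable {P : Type*} [PartialOrder P]

lemma scottOpen_Ici {k : P} (hk : IsCompactElt k) : ScottOpen (Set.Ici k) := by
  constructor
  · intro a b hab ha; exact le_trans ha hab
  · intro D hD hdir s hs hks
    obtain ⟨d, hd, hkd⟩ := hk D hD hdir s hs hks
    exact ⟨d, hd, hkd⟩

lemma Ici_mem_CO {k : P} (hk : IsCompactElt k) : Set.Ici k ∈ CO P := by
  refine ⟨scottOpen_Ici hk, ?_⟩
  intro C hC hcov
  obtain ⟨V, hV, hkV⟩ := hcov (Set.mem_Ici.mpr le_rfl)
  refine ⟨{V}, by simpa using hV, ?_⟩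
  intro x hx
  exact ⟨V, by simp, (hC V hV).1 hx hkV⟩

lemma empty_mem_CO : (∅ : Set P) ∈ CO P := by
  constructor
  · exact ⟨fun a b _ h => h.elim, fun D _ _ s _ h => h.elim⟩
  · intro C _ _; exact ⟨∅, by simp, by simp⟩

lemma union_mem_CO {U V : Set P} (hU : U ∈ CO P) (hV : V ∈ CO P) : U ∪ V ∈ CO P := by
  classical
  constructor
  · constructor
    · exact hU.1.1.union hV.1.1
    · intro D hD hdir s hs hsUV
      rcases hsUV with h | h
      · obtain ⟨d, hd, hdU⟩ := hU.1.2 D hD hdir s hs h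
        exact ⟨d, hd, Or.inl hdU⟩
      · obtain ⟨d, hd, hdV⟩ := hV.1.2 D hD hdir s hs h
        exact ⟨d, hd, Or.inr hdV⟩
  · intro C hC hcov
    obtain ⟨F1, hF1, hUF1⟩ := hU.2 C hC (fun x hx => hcov (Or.inl hx))
    obtain ⟨F2, hF2, hVF2⟩ := hV.2 C hC (fun x hx => hcov (Or.inr hx))
    refine ⟨F1 ∪ F2, ?_, ?_⟩
    · intro V hV
      rcases Finset.mem_union.mp (by exact_mod_cast hV) with h | h
      · exact hF1 h
      · exact hF2 h
    · intro x hx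
      rcases hx with h | h
      · obtain ⟨W, hW, hxW⟩ := hUF1 h
        exact ⟨W, by simp [Finset.mem_union]; exact Or.inl (by exact_mod_cast hW), hxW⟩
      · obtain ⟨W, hW, hxW⟩ := hVF2 h
        exact ⟨W, by simp [Finset.mem_union]; exact Or.inr (by exact_mod_cast hW), hxW⟩

lemma sUnion_finset_mem_CO (F : Finset (Set P)) (h : ∀ V ∈ F, V ∈ CO P) :
    ⋃₀ (F : Set (Set P)) ∈ CO P := by
  classical
  induction F using Finset.induction_on with
  | empty => simpa using empty_mem_CO
  | @insert V F' hVF ih =>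
    rw [Finset.coe_insert, Set.sUnion_insert]
    exact union_mem_CO (h V (Finset.mem_insert_self _ _))
      (ih fun W hW => h W (Finset.mem_insert_of_mem hW))

lemma coprime_finite_cover {U : Set P} (hUne : U ≠ ∅)
    (hcp : ∀ V ∈ CO P, ∀ W ∈ CO P, U ⊆ V ∪ W → U ⊆ V ∨ U ⊆ W) :
    ∀ F : Finset (Set P), (∀ V ∈ F, V ∈ CO P) → U ⊆ ⋃₀ (F : Set (Set P)) →
      ∃ V ∈ F, U ⊆ V := by
  classical
  intro F
  induction F using Finset.induction_on with
  | empty =>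
    intro _ hsub
    exfalso
    apply hUne
    have : U ⊆ ∅ := by simpa using hsub
    exact Set.eq_empty_iff_forall_notMem.mpr fun x hx => this hx
  | @insert V F' hVF ih =>
    intro hmem hsub
    rw [Finset.coe_insert, Set.sUnion_insert] at hsub
    rcases hcp V (hmem V (Finset.mem_insert_self _ _))
      (⋃₀ (F' : Set (Set P)))
      (sUnion_finset_mem_CO F' fun W hW => hmem W (Finset.mem_insert_of_mem hW)) hsub with h | h
    · exact ⟨V, Finset.mem_insert_self _ _, h⟩
    · obtain ⟨W, hW, hUW⟩ := ih (fun W hW => hmem W (Finset.mem_insert_of_mem hW)) h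
      exact ⟨W, Finset.mem_insert_of_mem hW, hUW⟩

end Aux

/-- In a Lawson compact algebraic L-domain `P`, the nonempty co-prime
elements of the lattice `CO P` of compact-open sets (ordered by inclusion, so that
joins are unions) are precisely the principal filters `↑k` of compact elements. -/
theorem stmt1 (P : Type*) [PartialOrder P]
    (h1 : IsAlgebraicLDomain P) (h2 : LawsonCompact P) :
    ∀ U ∈ CO P, U ≠ ∅ →
      ((∀ V ∈ CO P, ∀ W ∈ CO P, U ⊆ V ∪ W → U ⊆ V ∨ U ⊆ W) ↔
        ∃ k : P, IsCompactElt k ∧ U = Set.Ici k) := by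
  classical
  obtain ⟨⟨hdc, halg⟩, _⟩ := h1
  intro U hU hUne
  constructor
  · -- coprime → principal filter of a compact element
    intro hcp
    obtain ⟨hUopen, hUcomp⟩ := hU
    -- cover U by principal filters of compact elements inside U
    set C : Set (Set P) := {V | ∃ k : P, IsCompactElt k ∧ k ∈ U ∧ V = Set.Ici k} with hC
    have hCopen : ∀ V ∈ C, ScottOpen V := by
      rintro V ⟨k, hk, _, rfl⟩; exact scottOpen_Ici hk
    have hcov : U ⊆ ⋃₀ C := by
      intro x hx
      obtain ⟨hne, hdir, hlub⟩ := halg x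
      obtain ⟨k, hkD, hkU⟩ := hUopen.2 _ hne hdir x hlub hx
      exact ⟨Set.Ici k, ⟨k, hkD.2, hkU, rfl⟩, Set.mem_Ici.mpr hkD.1⟩
    obtain ⟨F, hFC, hUF⟩ := hUcomp C hCopen hcov
    have hFCO : ∀ V ∈ F, V ∈ CO P := by
      intro V hV
      obtain ⟨k, hk, _, rfl⟩ := hFC hV
      exact Ici_mem_CO hk
    obtain ⟨V, hVF, hUV⟩ := coprime_finite_cover hUne hcp F hFCO hUF
    obtain ⟨k, hk, hkU, rfl⟩ := hFC hVF
    refine ⟨k, hk, Set.Subset.antisymm hUV ?_⟩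
    intro x hx
    exact hUopen.1 hx hkU
  · -- principal filter of a compact element → coprime
    rintro ⟨k, hk, rfl⟩ V hV W hW hsub
    rcases hsub (Set.mem_Ici.mpr le_rfl) with h | h
    · exact Or.inl fun x hx => hV.1.1 hx h
    · exact Or.inr fun x hx => hW.1.1 hx h
end

section
/- Let L be an FDD-lattice and p a point of L. Then the set H_p = {γ_a : a ∈ Cp(L), γ_a ≤ p} is a nonempty directed subset of pt(L). -/
private lemma point_mono' {L : Type*} [Lattice L] [BoundedOrder L] {p : L → Bool}
    (hp : IsPoint p) {a b : L} (hab : a ≤ b) (ha : p a = true) : p b = true := by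
  have h := hp.2.2.1 a b
  rw [inf_eq_left.mpr hab] at h
  rw [h, Bool.and_eq_true] at ha
  exact ha.2

private lemma point_sup' {L : Type*} [Lattice L] [BoundedOrder L] {p : L → Bool}
    (hp : IsPoint p) (F : Finset L) (h : p (F.sup id) = true) : ∃ a ∈ F, p a = true := by
  classical
  induction F using Finset.induction_on with
  | empty =>
    rw [Finset.sup_empty, hp.1] at h
    exact absurd h (by simp)
  | insert _ _ hx ih =>
    rw [Finset.sup_insert, hp.2.2.2, Bool.or_eq_true] at h
    rcases h with h1 | h2
    · exact ⟨_, Finset.mem_insert_self _ _, h1⟩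
    · obtain ⟨a, ha, hpa⟩ := ih h2
      exact ⟨a, Finset.mem_insert_of_mem ha, hpa⟩

private lemma gamma_isPoint' {L : Type*} [Lattice L] [BoundedOrder L] {a : L}
    (ha : CoprimeElt a) : IsPoint (gammaPt a) := by
  refine ⟨?_, ?_, ?_, ?_⟩
  · simp only [gammaPt, decide_eq_false_iff_not, le_bot_iff]
    exact ha.1
  · simp [gammaPt]
  · intro x y
    simp only [gammaPt]
    rw [Bool.eq_iff_iff]
    simp [le_inf_iff]
  · intro x y
    simp only [gammaPt]
    rw [Bool.eq_iff_iff]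
    simp only [Bool.or_eq_true, decide_eq_true_eq]
    constructor
    · exact ha.2 x y
    · rintro (h | h)
      · exact h.trans le_sup_left
      · exact h.trans le_sup_right

private lemma gamma_le' {L : Type*} [Lattice L] [BoundedOrder L] {a : L}
    {p : L → Bool} (hp : IsPoint p) (hpa : p a = true) :
    gammaPt a ≤ p := by
  intro x
  by_cases h : gammaPt a x = true
  · rw [h]
    simp only [gammaPt, decide_eq_true_eq] at h
    rw [point_mono' hp h hpa]
  · simp only [Bool.not_eq_true] at h
    rw [h]
    exact Bool.false_le _

/-- For an FDD-lattice `L` and a point `p`, the set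
`H_p = {γ_a : a ∈ Cp(L), γ_a ≤ p}` is a nonempty directed subset of `Pt L`. -/
theorem stmt5 {L : Type*} [DistribLattice L] [BoundedOrder L] (hL : IsFDD L)
    (p : Pt L) :
    ({q : Pt L | ∃ a : L, CoprimeElt a ∧ q.1 = gammaPt a ∧ q ≤ p}).Nonempty ∧
    DirectedOn (· ≤ ·) {q : Pt L | ∃ a : L, CoprimeElt a ∧ q.1 = gammaPt a ∧ q ≤ p} := by
  classical
  obtain ⟨q0, hq0⟩ := p
  have key : ∀ a : L, q0 a = true → ∀ hca : CoprimeElt a,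
      (⟨gammaPt a, gamma_isPoint' hca⟩ : Pt L) ∈
        {q : Pt L | ∃ a : L, CoprimeElt a ∧ q.1 = gammaPt a ∧ q ≤ ⟨q0, hq0⟩} := by
    intro a hpa hca
    exact ⟨a, hca, rfl, gamma_le' hq0 hpa⟩
  have ptrue : ∀ {q : L → Bool} {x : L}, true ≤ q x → q x = true := by
    intro q x h
    cases hx : q x with
    | true => rfl
    | false => rw [hx] at h; exact absurd h (by decide)
  constructor
  · obtain ⟨F, hF, hFsup⟩ := hL.1 ⊤
    have htop : q0 (F.sup id) = true := by rw [← hFsup]; exact hq0.2.1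
    obtain ⟨a, haF, hpa⟩ := point_sup' hq0 F htop
    exact ⟨_, key a hpa (hF a haF)⟩
  · rintro q1 ⟨a, hca, hq1, hq1p⟩ q2 ⟨b, hcb, hq2, hq2p⟩
    have hpa : q0 a = true := by
      have h : gammaPt a a ≤ q0 a := by rw [← hq1]; exact hq1p a
      rw [show gammaPt a a = true by simp [gammaPt]] at h
      exact ptrue h
    have hpb : q0 b = true := by
      have h : gammaPt b b ≤ q0 b := by rw [← hq2]; exact hq2p b
      rw [show gammaPt b b = true by simp [gammaPt]] at h
      exact ptrue h
    have hpab : q0 (a ⊓ b) = true := by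
      rw [hq0.2.2.1, hpa, hpb]; rfl
    obtain ⟨F, hF, _, hFsup⟩ := hL.2 a b hca hcb
    rw [hFsup] at hpab
    obtain ⟨c, hcF, hpc⟩ := point_sup' hq0 F hpab
    have hcc := hF c hcF
    have hcab : c ≤ a ⊓ b := hFsup ▸ Finset.le_sup (f := id) hcF
    have hga : gammaPt a ≤ gammaPt c := by
      intro x
      by_cases h : gammaPt a x = true
      · simp only [gammaPt, decide_eq_true_eq] at h ⊢
        rw [decide_eq_true (le_trans (hcab.trans inf_le_left) h)]
        exact Bool.le_true _
      · simp only [Bool.not_eq_true] at h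
        rw [h]; exact Bool.false_le _
    have hgb : gammaPt b ≤ gammaPt c := by
      intro x
      by_cases h : gammaPt b x = true
      · simp only [gammaPt, decide_eq_true_eq] at h ⊢
        rw [decide_eq_true (le_trans (hcab.trans inf_le_right) h)]
        exact Bool.le_true _
      · simp only [Bool.not_eq_true] at h
        rw [h]; exact Bool.false_le _
    refine ⟨⟨gammaPt c, gamma_isPoint' hcc⟩, key c hpc hcc, ?_, ?_⟩
    · show q1.1 ≤ gammaPt c
      rw [hq1]; exact hga
    · show q2.1 ≤ gammaPt c
      rw [hq2]; exact hgb
end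

section
/- If L is an FDD-lattice, then the poset pt(L) of points of L, ordered pointwise, is an algebraic domain: it is a dcpo and for every point p, the set of compact elements of pt(L) below p is directed with supremum p. -/
-- ### auxiliary development

section Aux
variable {L : Type*} [Lattice L] [BoundedOrder L]

lemma point_mono {p : L → Bool} (hp : IsPoint p) {x y : L} (hxy : x ≤ y)
    (hx : p x = true) : p y = true := by
  have h := hp.2.2.1 x y
  rw [inf_eq_left.mpr hxy, hx] at h
  simpa using h.symm

lemma pt_le_iff {p q : Pt L} : p ≤ q ↔ ∀ x, p.1 x = true → q.1 x = true := by
  constructor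
  · intro h x hx
    have := h x
    rw [Bool.le_iff_imp] at this
    exact this hx
  · intro h x
    rw [Bool.le_iff_imp]
    exact h x

lemma point_finsetSup {p : L → Bool} (hp : IsPoint p) (F : Finset L) :
    p (F.sup id) = true ↔ ∃ a ∈ F, p a = true := by
  classical
  induction F using Finset.induction_on with
  | empty => simp [hp.1]
  | insert _ _ hx ih =>
    rename_i a F
    rw [Finset.sup_insert]
    simp only [id, hp.2.2.2, Bool.or_eq_true, ih]
    constructor
    · rintro (h | ⟨b, hb, h⟩)
      · exact ⟨a, Finset.mem_insert_self _ _, h⟩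
      · exact ⟨b, Finset.mem_insert_of_mem hb, h⟩
    · rintro ⟨b, hb, h⟩
      rcases Finset.mem_insert.mp hb with rfl | hb
      · exact Or.inl h
      · exact Or.inr ⟨b, hb, h⟩

lemma gammaPt_eq_true {a x : L} : gammaPt a x = true ↔ a ≤ x := by
  simp [gammaPt]

lemma bool_eq_of_iff {a b : Bool} (h : a = true ↔ b = true) : a = b := by
  cases a <;> cases b <;> simp_all

lemma gammaPt_isPoint {a : L} (ha : CoprimeElt a) : IsPoint (gammaPt a) := by
  refine ⟨?_, ?_, ?_, ?_⟩
  · rw [Bool.eq_false_iff]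
    intro h
    exact ha.1 (le_bot_iff.mp (gammaPt_eq_true.mp h))
  · exact gammaPt_eq_true.mpr le_top
  · intro x y
    apply bool_eq_of_iff
    simp [gammaPt_eq_true, Bool.and_eq_true, le_inf_iff]
  · intro x y
    apply bool_eq_of_iff
    rw [Bool.or_eq_true, gammaPt_eq_true, gammaPt_eq_true, gammaPt_eq_true]
    constructor
    · exact ha.2 x y
    · rintro (h | h)
      · exact h.trans le_sup_left
      · exact h.trans le_sup_right

/-- the pointwise supremum of a set of points -/
noncomputable def ptSup (D : Set (Pt L)) : L → Bool :=
  fun x => @decide (∃ p ∈ D, p.1 x = true) (Classical.propDecidable _)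

lemma ptSup_eq_true {D : Set (Pt L)} {x : L} :
    ptSup D x = true ↔ ∃ p ∈ D, p.1 x = true := by simp [ptSup]

lemma ptSup_isPoint {D : Set (Pt L)} (hne : D.Nonempty)
    (hdir : DirectedOn (· ≤ ·) D) : IsPoint (ptSup D) := by
  refine ⟨?_, ?_, ?_, ?_⟩
  · rw [Bool.eq_false_iff]
    intro h
    obtain ⟨p, _, hp⟩ := ptSup_eq_true.mp h
    rw [p.2.1] at hp
    exact Bool.false_ne_true hp
  · obtain ⟨p, hp⟩ := hne
    exact ptSup_eq_true.mpr ⟨p, hp, p.2.2.1⟩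
  · intro x y
    apply bool_eq_of_iff
    rw [Bool.and_eq_true, ptSup_eq_true, ptSup_eq_true, ptSup_eq_true]
    constructor
    · rintro ⟨p, hpD, hp⟩
      rw [p.2.2.2.1, Bool.and_eq_true] at hp
      exact ⟨⟨p, hpD, hp.1⟩, ⟨p, hpD, hp.2⟩⟩
    · rintro ⟨⟨p, hpD, hp⟩, ⟨q, hqD, hq⟩⟩
      obtain ⟨r, hrD, hpr, hqr⟩ := hdir p hpD q hqD
      refine ⟨r, hrD, ?_⟩
      rw [r.2.2.2.1, pt_le_iff.mp hpr x hp, pt_le_iff.mp hqr y hq]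
      rfl
  · intro x y
    apply bool_eq_of_iff
    rw [Bool.or_eq_true, ptSup_eq_true, ptSup_eq_true, ptSup_eq_true]
    constructor
    · rintro ⟨p, hpD, hp⟩
      rw [p.2.2.2.2, Bool.or_eq_true] at hp
      rcases hp with hp | hp
      · exact Or.inl ⟨p, hpD, hp⟩
      · exact Or.inr ⟨p, hpD, hp⟩
    · rintro (⟨p, hpD, hp⟩ | ⟨p, hpD, hp⟩)
      · exact ⟨p, hpD, point_mono p.2 le_sup_left hp⟩
      · exact ⟨p, hpD, point_mono p.2 le_sup_right hp⟩

lemma ptSup_isLUB {D : Set (Pt L)} (hne : D.Nonempty) (hdir : DirectedOn (· ≤ ·) D) :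
    IsLUB D ⟨ptSup D, ptSup_isPoint hne hdir⟩ := by
  constructor
  · intro p hp
    exact pt_le_iff.mpr fun x hx => ptSup_eq_true.mpr ⟨p, hp, hx⟩
  · intro q hq
    refine pt_le_iff.mpr fun x hx => ?_
    obtain ⟨p, hpD, hp⟩ := ptSup_eq_true.mp hx
    exact pt_le_iff.mp (hq hpD) x hp

lemma gammaPt_compact {a : L} (ha : CoprimeElt a) :
    IsCompactElt (⟨gammaPt a, gammaPt_isPoint ha⟩ : Pt L) := by
  intro D hne hdir s hs hle
  have hs' : s = ⟨ptSup D, ptSup_isPoint hne hdir⟩ := hs.unique (ptSup_isLUB hne hdir)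
  have hsa : s.1 a = true := pt_le_iff.mp hle a (gammaPt_eq_true.mpr le_rfl)
  rw [hs'] at hsa
  obtain ⟨p, hpD, hp⟩ := ptSup_eq_true.mp hsa
  exact ⟨p, hpD, pt_le_iff.mpr fun x hx => point_mono p.2 (gammaPt_eq_true.mp hx) hp⟩

end Aux

/-- For an FDD-lattice `L`, the poset `Pt L` of points with the pointwise
order is an algebraic domain. -/
theorem stmt8 {L : Type*} [DistribLattice L] [BoundedOrder L] (hL : IsFDD L) :
    IsAlgebraicDomain (Pt L) := by
  constructor
  · intro D hne hdir
    exact ⟨_, ptSup_isLUB hne hdir⟩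
  · intro p
    -- the directed family of gamma points below p
    set D : Set (Pt L) := {q | ∃ a : L, ∃ ha : CoprimeElt a, p.1 a = true ∧
      q = ⟨gammaPt a, gammaPt_isPoint ha⟩} with hD
    have hDsub : D ⊆ Set.Iic p ∩ {k | IsCompactElt k} := by
      rintro q ⟨a, ha, hpa, rfl⟩
      refine ⟨pt_le_iff.mpr fun x hx => point_mono p.2 (gammaPt_eq_true.mp hx) hpa,
        gammaPt_compact ha⟩
    have hDne : D.Nonempty := by
      obtain ⟨F, hF, hFsup⟩ := hL.1 ⊤
      have : p.1 (F.sup id) = true := by rw [← hFsup]; exact p.2.2.1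
      obtain ⟨a, haF, hpa⟩ := (point_finsetSup p.2 F).mp this
      exact ⟨_, a, hF a haF, hpa, rfl⟩
    have hDdir : DirectedOn (· ≤ ·) D := by
      rintro q ⟨a, ha, hpa, rfl⟩ q' ⟨b, hb, hpb, rfl⟩
      obtain ⟨F, hF, _, hFsup⟩ := hL.2 a b ha hb
      have : p.1 (F.sup id) = true := by
        rw [← hFsup, p.2.2.2.1, hpa, hpb]; rfl
      obtain ⟨c, hcF, hpc⟩ := (point_finsetSup p.2 F).mp this
      have hca : c ≤ a := le_trans (hFsup ▸ Finset.le_sup (f := id) hcF) inf_le_left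
      have hcb : c ≤ b := le_trans (hFsup ▸ Finset.le_sup (f := id) hcF) inf_le_right
      refine ⟨⟨gammaPt c, gammaPt_isPoint (hF c hcF)⟩, ⟨c, hF c hcF, hpc, rfl⟩, ?_, ?_⟩
      · exact pt_le_iff.mpr fun x hx =>
          gammaPt_eq_true.mpr (hca.trans (gammaPt_eq_true.mp hx))
      · exact pt_le_iff.mpr fun x hx =>
          gammaPt_eq_true.mpr (hcb.trans (gammaPt_eq_true.mp hx))
    have hDlub : IsLUB D p := by
      constructor
      · intro q hq
        exact (hDsub hq).1
      · intro q hq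
        refine pt_le_iff.mpr fun x hx => ?_
        obtain ⟨F, hF, hFsup⟩ := hL.1 x
        have : p.1 (F.sup id) = true := hFsup ▸ hx
        obtain ⟨a, haF, hpa⟩ := (point_finsetSup p.2 F).mp this
        have hq' : (⟨gammaPt a, gammaPt_isPoint (hF a haF)⟩ : Pt L) ≤ q :=
          hq ⟨a, hF a haF, hpa, rfl⟩
        exact pt_le_iff.mp hq' x
          (gammaPt_eq_true.mpr ((hFsup ▸ Finset.le_sup (f := id) haF : a ≤ x)))
    refine ⟨hDne.mono hDsub, ?_, ?_⟩
    · rintro k ⟨hk1, hk2⟩ k' ⟨hk1', hk2'⟩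
      obtain ⟨d, hdD, hkd⟩ := hk2 D hDne hDdir p hDlub hk1
      obtain ⟨d', hd'D, hkd'⟩ := hk2' D hDne hDdir p hDlub hk1'
      obtain ⟨e, heD, hde, hd'e⟩ := hDdir d hdD d' hd'D
      exact ⟨e, hDsub heD, hkd.trans hde, hkd'.trans hd'e⟩
    · constructor
      · intro k hk
        exact hk.1
      · intro q hq
        exact hDlub.2 fun d hd => hq (hDsub hd)
end

section
/- Let L be an FDD-lattice and a, b ∈ L with a ≰ b. Then there exists a point p of L such that p(a) = 1 and p(b) = 0. -/
/-- For an FDD-lattice `L` and elements `a ≰ b`, there is a point `p`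
with `p a = 1` and `p b = 0`. -/
theorem stmt11 {L : Type*} [DistribLattice L] [BoundedOrder L] (hL : IsFDD L)
    (a b : L) (hab : ¬ a ≤ b) :
    ∃ p : L → Bool, IsPoint p ∧ p a = true ∧ p b = false := by
  classical
  obtain ⟨F, hF, ha⟩ := hL.1 a
  have hc : ∃ c ∈ F, ¬ c ≤ b := by
    by_contra h
    push_neg at h
    exact hab (ha ▸ Finset.sup_le h)
  obtain ⟨c, hcF, hcb⟩ := hc
  obtain ⟨hc0, hcop⟩ := hF c hcF
  have hγ : ∀ x : L, gammaPt c x = true ↔ c ≤ x := by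
    intro x
    simp [gammaPt]
  have hγf : ∀ x : L, gammaPt c x = false ↔ ¬ c ≤ x := by
    intro x
    simp [gammaPt]
  have hsup : ∀ x y : L, c ≤ x ⊔ y ↔ (c ≤ x ∨ c ≤ y) := fun x y =>
    ⟨hcop x y, fun h => h.elim (fun h => h.trans le_sup_left) (fun h => h.trans le_sup_right)⟩
  refine ⟨gammaPt c, ⟨?_, ?_, ?_, ?_⟩, ?_, ?_⟩
  · rw [hγf]
    simpa [le_bot_iff] using hc0
  · rw [hγ]
    exact le_top
  · intro x y
    by_cases hx : c ≤ x <;> by_cases hy : c ≤ y <;> simp [gammaPt, le_inf_iff, hx, hy]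
  · intro x y
    by_cases hx : c ≤ x <;> by_cases hy : c ≤ y <;> simp [gammaPt, hsup, hx, hy]
  · rw [hγ, ha]
    exact Finset.le_sup (f := id) hcF
  · rw [hγf]
    exact hcb
end

section
/- Every Lawson compact algebraic L-domain M, as a topological space with its Scott topology, is coherent: the compact-open subsets of M form a basis of the Scott topology that is closed under finite intersections, so that CO(M) is a distributive sublattice of the frame of Scott-open sets. -/
section Aux

variable {M : Type*} [PartialOrder M]

lemma scottOpen_lawsonOpen (U : Set M) (h : ScottOpen U) :
    (lawsonTopology M).IsOpen U :=
  TopologicalSpace.GenerateOpen.basic U (Or.inl h)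

lemma ici_lawsonClosed (x : M) : @IsClosed M (lawsonTopology M) (Set.Ici x) := by
  letI : TopologicalSpace M := lawsonTopology M
  rw [← isOpen_compl_iff]
  exact TopologicalSpace.GenerateOpen.basic _ (Or.inr ⟨x, rfl⟩)

lemma lawsonClosed_scottCompact (h2 : LawsonCompact M) (S : Set M)
    (hS : @IsClosed M (lawsonTopology M) S) : ScottCompactSet S := by
  intro C hC hcov
  classical
  letI : TopologicalSpace M := lawsonTopology M
  haveI : CompactSpace M := h2
  have hcomp : IsCompact S := hS.isCompact
  have hsub : S ⊆ ⋃ V : C, (V : Set M) := by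
    rwa [← Set.sUnion_eq_iUnion]
  obtain ⟨t, ht⟩ := hcomp.elim_finite_subcover (fun V : C => (V : Set M))
    (fun V => scottOpen_lawsonOpen _ (hC V V.2)) hsub
  refine ⟨t.image Subtype.val, ?_, ?_⟩
  · intro V hV
    simp only [Finset.coe_image, Set.mem_image, Finset.mem_coe] at hV
    obtain ⟨a, _, rfl⟩ := hV
    exact a.2
  · intro x hx
    have := ht hx
    simp only [Set.mem_iUnion] at this
    obtain ⟨V, hVt, hxV⟩ := this
    refine ⟨V, ?_, hxV⟩
    simp only [Finset.coe_image, Set.mem_image, Finset.mem_coe]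
    exact ⟨V, hVt, rfl⟩

lemma ici_scottOpen {k : M} (hk : IsCompactElt k) : ScottOpen (Set.Ici k) :=
  ⟨fun _ _ hab ha => le_trans ha hab,
   fun D hne hdir s hs hks => by
    obtain ⟨d, hd, hkd⟩ := hk D hne hdir s hs hks
    exact ⟨d, hd, hkd⟩⟩

lemma ici_scottCompact (k : M) : ScottCompactSet (Set.Ici k) := by
  intro C hC hcov
  obtain ⟨V, hVC, hkV⟩ := hcov (le_refl k)
  exact ⟨{V}, by simp [hVC], fun x hx => ⟨V, by simp, (hC V hVC).1 hx hkV⟩⟩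

lemma basis_lemma (h1 : IsAlgebraicDomain M) (U : Set M) (hU : ScottOpen U)
    (x : M) (hx : x ∈ U) : ∃ k, IsCompactElt k ∧ k ≤ x ∧ k ∈ U := by
  obtain ⟨hne, hdir, hlub⟩ := h1.2 x
  obtain ⟨k, hkD, hkU⟩ := hU.2 _ hne hdir x hlub hx
  exact ⟨k, hkD.2, hkD.1, hkU⟩

lemma co_lawsonClosed (h1 : IsAlgebraicDomain M) (U : Set M) (hU : U ∈ CO M) :
    @IsClosed M (lawsonTopology M) U := by
  obtain ⟨hUo, hUc⟩ := hU
  set C : Set (Set M) := {V | ∃ k, IsCompactElt k ∧ k ∈ U ∧ V = Set.Ici k} with hCdef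
  have hCopen : ∀ V ∈ C, ScottOpen V := by
    rintro V ⟨k, hk, _, rfl⟩
    exact ici_scottOpen hk
  have hcov : U ⊆ ⋃₀ C := by
    intro x hx
    obtain ⟨k, hk, hkx, hkU⟩ := basis_lemma h1 U hUo x hx
    exact ⟨Set.Ici k, ⟨k, hk, hkU, rfl⟩, hkx⟩
  obtain ⟨F, hFC, hUF⟩ := hUc C hCopen hcov
  have hFU : ⋃₀ (F : Set (Set M)) ⊆ U := by
    rintro x ⟨V, hVF, hxV⟩
    obtain ⟨k, _, hkU, rfl⟩ := hFC hVF
    exact hUo.1 hxV hkU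
  have hEq : U = ⋃₀ (F : Set (Set M)) := le_antisymm hUF hFU
  rw [hEq, Set.sUnion_eq_biUnion]
  letI : TopologicalSpace M := lawsonTopology M
  apply Set.Finite.isClosed_biUnion (F.finite_toSet)
  intro V hV
  obtain ⟨k, _, _, rfl⟩ := hFC hV
  exact ici_lawsonClosed k

lemma scottOpen_inter {U V : Set M} (hU : ScottOpen U) (hV : ScottOpen V) :
    ScottOpen (U ∩ V) := by
  refine ⟨hU.1.inter hV.1, ?_⟩
  intro D hne hdir s hs hsUV
  obtain ⟨d₁, hd₁D, hd₁U⟩ := hU.2 D hne hdir s hs hsUV.1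
  obtain ⟨d₂, hd₂D, hd₂V⟩ := hV.2 D hne hdir s hs hsUV.2
  obtain ⟨d, hdD, hd₁, hd₂⟩ := hdir d₁ hd₁D d₂ hd₂D
  exact ⟨d, hdD, hU.1 hd₁ hd₁U, hV.1 hd₂ hd₂V⟩

lemma scottOpen_union {U V : Set M} (hU : ScottOpen U) (hV : ScottOpen V) :
    ScottOpen (U ∪ V) := by
  refine ⟨hU.1.union hV.1, ?_⟩
  intro D hne hdir s hs hsUV
  rcases hsUV with h | h
  · obtain ⟨d, hdD, hdU⟩ := hU.2 D hne hdir s hs h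
    exact ⟨d, hdD, Or.inl hdU⟩
  · obtain ⟨d, hdD, hdV⟩ := hV.2 D hne hdir s hs h
    exact ⟨d, hdD, Or.inr hdV⟩

end Aux

/-- Every Lawson compact algebraic L-domain `M`, with its Scott topology,
is coherent: the compact-open sets form a basis of the Scott topology closed under
finite intersections, so `CO M` is a (bounded, distributive) sublattice of the Scott
opens. -/
theorem stmt14 {M : Type*} [PartialOrder M]
    (h1 : IsAlgebraicLDomain M) (h2 : LawsonCompact M) :
    (∀ U : Set M, ScottOpen U → ∀ x ∈ U, ∃ V ∈ CO M, x ∈ V ∧ V ⊆ U) ∧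
    (∀ U ∈ CO M, ScottOpen U) ∧
    (Set.univ : Set M) ∈ CO M ∧ (∅ : Set M) ∈ CO M ∧
    (∀ U ∈ CO M, ∀ V ∈ CO M, U ∩ V ∈ CO M ∧ U ∪ V ∈ CO M) := by
  obtain ⟨halg, -⟩ := h1
  refine ⟨?_, ?_, ?_, ?_, ?_⟩
  · -- basis
    intro U hU x hx
    obtain ⟨k, hk, hkx, hkU⟩ := basis_lemma halg U hU x hx
    exact ⟨Set.Ici k, ⟨ici_scottOpen hk, ici_scottCompact k⟩, hkx,
      fun y hy => hU.1 hy hkU⟩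
  · exact fun U hU => hU.1
  · -- univ
    refine ⟨⟨fun _ _ _ _ => trivial, fun D hne _ _ _ _ =>
      hne.imp fun d hd => ⟨hd, trivial⟩⟩, ?_⟩
    exact lawsonClosed_scottCompact h2 _ (@isClosed_univ M (lawsonTopology M))
  · -- empty
    refine ⟨⟨fun _ _ _ h => h, fun D _ _ s _ h => absurd h (Set.notMem_empty s)⟩, ?_⟩
    exact fun C _ _ => ⟨∅, by simp, by simp⟩
  · intro U hU V hV
    constructor
    · refine ⟨scottOpen_inter hU.1 hV.1, ?_⟩
      refine lawsonClosed_scottCompact h2 _ ?_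
      letI : TopologicalSpace M := lawsonTopology M
      exact (co_lawsonClosed halg U hU).inter (co_lawsonClosed halg V hV)
    · refine ⟨scottOpen_union hU.1 hV.1, ?_⟩
      intro C hC hcov
      classical
      obtain ⟨F₁, hF₁, hUF₁⟩ := hU.2 C hC (Set.Subset.trans Set.subset_union_left hcov)
      obtain ⟨F₂, hF₂, hVF₂⟩ := hV.2 C hC (Set.Subset.trans Set.subset_union_right hcov)
      refine ⟨F₁ ∪ F₂, ?_, ?_⟩
      · intro W hW
        rcases Finset.mem_coe.mp hW |> Finset.mem_union.mp with h | h
        · exact hF₁ h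
        · exact hF₂ h
      · rintro x (hx | hx)
        · obtain ⟨W, hWF, hxW⟩ := hUF₁ hx
          exact ⟨W, Finset.mem_union_left _ hWF, hxW⟩
        · obtain ⟨W, hWF, hxW⟩ := hVF₂ hx
          exact ⟨W, Finset.mem_union_right _ hWF, hxW⟩
end
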